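/- For every quaternion matrix A ∈ ℍ^{m×n}, every right eigenvalue of AᴴA is a nonnegative real number: if λ ∈ ℍ and there exists a nonzero vector x ∈ ℍ^n with (AᴴA)·x = x·λ (componentwise, ((AᴴA)·x)ᵢ = xᵢ·λ for all i), then λ is a real quaternion and λ ≥ 0. -/
import Mathlib


open scoped Quaternion Matrix

lemma qcoe_sum {ι : Type*} (s : Finset ι) (f : ι → ℝ) :
    ((∑ i ∈ s, f i : ℝ) : ℍ[ℝ]) = ∑ i ∈ s, (f i : ℍ[ℝ]) := by
  rw [← Quaternion.algebraMap_def]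
  exact map_sum (algebraMap ℝ ℍ[ℝ]) f s

/-- Every right eigenvalue of `AᴴA` is a nonnegative real number, for any quaternion
matrix `A`. -/
theorem right_eigenvalue_conjTranspose_mul_self_nonneg (m n : ℕ)
    (A : Matrix (Fin m) (Fin n) ℍ[ℝ]) (lam : ℍ[ℝ]) (x : Fin n → ℍ[ℝ]) (hx : x ≠ 0)
    (heig : ∀ i, (Aᴴ * A).mulVec x i = x i * lam) :
    ∃ r : ℝ, 0 ≤ r ∧ lam = (r : ℍ[ℝ]) := by
  classical
  set y : Fin m → ℍ[ℝ] := A.mulVec x with hy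
  set c : ℝ := ∑ i, Quaternion.normSq (x i) with hc
  set d : ℝ := ∑ k, Quaternion.normSq (y k) with hd
  have hcpos : 0 < c := by
    obtain ⟨i, hi⟩ : ∃ i, x i ≠ 0 := by
      by_contra h
      push_neg at h
      exact hx (funext h)
    apply Finset.sum_pos' (fun j _ => Quaternion.normSq_nonneg)
    exact ⟨i, Finset.mem_univ i,
      lt_of_le_of_ne Quaternion.normSq_nonneg (Ne.symm (Quaternion.normSq_ne_zero.2 hi))⟩
  have hdnn : 0 ≤ d := Finset.sum_nonneg fun k _ => Quaternion.normSq_nonneg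
  have h1 : ∑ i, star (x i) * ((Aᴴ * A).mulVec x i) = (c : ℍ[ℝ]) * lam := by
    simp only [heig, ← mul_assoc, Quaternion.star_mul_self]
    rw [← Finset.sum_mul, hc, qcoe_sum]
  have h2 : ∑ i, star (x i) * ((Aᴴ * A).mulVec x i) = (d : ℍ[ℝ]) := by
    have hm : (Aᴴ * A).mulVec x = Aᴴ.mulVec y := by
      rw [hy, Matrix.mulVec_mulVec]
    rw [hm]
    have key : ∑ i, star (x i) * Aᴴ.mulVec y i = ∑ k, star (y k) * y k := by
      simp only [Matrix.mulVec, dotProduct, Matrix.conjTranspose_apply,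
        Finset.mul_sum, ← mul_assoc]
      rw [Finset.sum_comm]
      refine Finset.sum_congr rfl fun k _ => ?_
      rw [← Finset.sum_mul]
      congr 1
      simp [hy, Matrix.mulVec, dotProduct, star_sum, star_mul]
    rw [key]
    simp only [Quaternion.star_mul_self]
    rw [hd, qcoe_sum]
  have hkey : (c : ℍ[ℝ]) * lam = (d : ℍ[ℝ]) := h1 ▸ h2
  have hc0 : (c : ℍ[ℝ]) ≠ 0 := by
    simpa using Quaternion.coe_injective.ne hcpos.ne'
  refine ⟨d / c, div_nonneg hdnn hcpos.le, ?_⟩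
  rw [Quaternion.coe_div, eq_div_iff hc0, ← Quaternion.coe_commutes]
  exact hkey
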